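/- For every string x and every string y, C(x) ≤ C(x | C(x)) + O(1), where C denotes plain Kolmogorov complexity; more precisely, there is a constant c such that for all x, C(x) ≤ C(x | C(x)) + c. -/

import Mathlib

/-- An optimal universal machine for plain conditional Kolmogorov complexity.
`V` takes (the pairing of) a program `p` and a condition `z` (both encoded as
natural numbers, standing for binary strings via `Nat.size`-bit encodings) and
may output a string `x`. Optimality: every partial computable machine is
simulated with only a constant additive overhead in program length. -/
structure OptimalMachine where
  V : ℕ →. ℕ
  partrec : Nat.Partrec V
  optimal : ∀ V' : ℕ →. ℕ, Nat.Partrec V' → ∃ c : ℕ, ∀ p z x : ℕ,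
    x ∈ V' (Nat.pair p z) → ∃ q : ℕ, x ∈ V (Nat.pair q z) ∧
      Nat.size q ≤ Nat.size p + c

/-- Plain conditional Kolmogorov complexity C(x|z): the least bit-length of a
program p with U(p, z) = x. -/
noncomputable def KC (U : OptimalMachine) (x z : ℕ) : ℕ :=
  sInf {L | ∃ p : ℕ, x ∈ U.V (Nat.pair p z) ∧ Nat.size p = L}

namespace KCaux

/-- Padded encoding of `(k, d, p)` as a single number. -/
def E (k d p : ℕ) : ℕ := (2 * (p * 2 ^ k + d) + 1) * 2 ^ k

/-- The search predicate used by the auxiliary machine. -/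
def QB (r j : ℕ) : Bool :=
  (decide (r = E j.unpair.1.unpair.1 j.unpair.1.unpair.2 j.unpair.2.unpair.1)) &&
  (decide (j.unpair.1.unpair.2 < 2 ^ j.unpair.1.unpair.1)) &&
  (decide (j.unpair.2.unpair.1 < 2 ^ j.unpair.2.unpair.2)) &&
  (decide (2 ^ j.unpair.2.unpair.2 ≤ 2 * j.unpair.2.unpair.1 + 1))

lemma size_char {p s : ℕ} (h1 : p < 2 ^ s) (h2 : 2 ^ s ≤ 2 * p + 1) :
    s = Nat.size p := by
  have hle : Nat.size p ≤ s := Nat.size_le.2 h1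
  have h3 : p < 2 ^ Nat.size p := Nat.lt_size_self p
  have h4 : (2 : ℕ) ^ (Nat.size p + 1) = 2 * 2 ^ Nat.size p := by ring
  have h5 : 2 ^ s < 2 ^ (Nat.size p + 1) := by omega
  have h6 : s < Nat.size p + 1 := by
    exact (Nat.pow_lt_pow_iff_right (by norm_num)).1 h5
  omega

lemma pow_size_le (p : ℕ) : 2 ^ Nat.size p ≤ 2 * p + 1 := by
  rcases Nat.eq_zero_or_pos p with h | h
  · subst h; simp [Nat.size_zero]
  · have hs : 0 < Nat.size p := Nat.size_pos.2 h
    have h2 : 2 ^ (Nat.size p - 1) ≤ p := Nat.lt_size.1 (by omega)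
    have h3 : (2 : ℕ) ^ Nat.size p = 2 * 2 ^ (Nat.size p - 1) := by
      rw [← pow_succ']
      congr 1
      omega
    omega

lemma k_le_of_E {a b k k' : ℕ} (h : (2 * a + 1) * 2 ^ k = (2 * b + 1) * 2 ^ k') :
    k ≤ k' := by
  by_contra hlt
  push_neg at hlt
  have h2 : (2 * a + 1) * 2 ^ (k - k') * 2 ^ k' = (2 * b + 1) * 2 ^ k' := by
    rw [mul_assoc, ← pow_add, show k - k' + k' = k from by omega]
    exact h
  have h3 : (2 * a + 1) * 2 ^ (k - k') = 2 * b + 1 :=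
    Nat.eq_of_mul_eq_mul_right (Nat.pow_pos (by norm_num)) h2
  have h5 : (2 : ℕ) ∣ 2 * b + 1 := by
    rw [← h3]
    exact Dvd.dvd.mul_left (dvd_pow_self 2 (by omega : k - k' ≠ 0)) _
  omega

lemma E_inj {k d p k' d' p' : ℕ} (hd : d < 2 ^ k) (hd' : d' < 2 ^ k')
    (h : E k d p = E k' d' p') : k = k' ∧ d = d' ∧ p = p' := by
  have hk : k = k' := le_antisymm (k_le_of_E h) (k_le_of_E h.symm)
  subst hk
  have hA : p * 2 ^ k + d = p' * 2 ^ k + d' := by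
    have := Nat.eq_of_mul_eq_mul_right (Nat.pow_pos (n := k) (by norm_num : 0 < 2)) h
    omega
  have hp : p = p' := by
    rcases lt_trichotomy p p' with hlt | heq | hgt
    · exfalso
      have : (p + 1) * 2 ^ k ≤ p' * 2 ^ k := Nat.mul_le_mul_right _ (by omega)
      nlinarith
    · exact heq
    · exfalso
      have : (p' + 1) * 2 ^ k ≤ p * 2 ^ k := Nat.mul_le_mul_right _ (by omega)
      nlinarith
  subst hp
  refine ⟨rfl, ?_, rfl⟩
  omega

lemma size_E {k d p : ℕ} (hd : d < 2 ^ k) :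
    Nat.size (E k d p) ≤ Nat.size p + 2 * k + 1 := by
  apply Nat.size_le.2
  have h1 : p < 2 ^ Nat.size p := Nat.lt_size_self p
  have hA : p * 2 ^ k + d < 2 ^ (Nat.size p + k) := by
    have h2 : p * 2 ^ k + d < (p + 1) * 2 ^ k := by nlinarith
    have h3 : (p + 1) * 2 ^ k ≤ 2 ^ Nat.size p * 2 ^ k :=
      Nat.mul_le_mul_right _ (by omega)
    rw [pow_add]
    omega
  have h4 : 2 * (p * 2 ^ k + d) + 1 < 2 ^ (Nat.size p + k + 1) := by
    have : (2 : ℕ) ^ (Nat.size p + k + 1) = 2 * 2 ^ (Nat.size p + k) := by ring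
    omega
  have h5 : E k d p < 2 ^ (Nat.size p + k + 1) * 2 ^ k :=
    Nat.mul_lt_mul_of_lt_of_le h4 (le_refl _) (Nat.pow_pos (by norm_num))
  calc E k d p < 2 ^ (Nat.size p + k + 1) * 2 ^ k := h5
    _ = 2 ^ (Nat.size p + 2 * k + 1) := by rw [← pow_add]; ring_nf

lemma three_mul_le {s : ℕ} (hs : 6 ≤ s) : 3 * s ≤ 2 ^ (s - 1) := by
  induction s, hs using Nat.le_induction with
  | base => norm_num
  | succ s hs ih =>
    have h1 : (s + 1) - 1 = (s - 1) + 1 := by omega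
    rw [h1, pow_succ]
    omega

lemma d_bound {c d : ℕ} (h : d ≤ 2 * Nat.size d + c) : d ≤ 3 * c + 15 := by
  by_contra hb
  push_neg at hb
  set s := Nat.size d with hs
  have hspos : 0 < s := Nat.size_pos.2 (by omega)
  have h2 : 2 ^ (s - 1) ≤ d := Nat.lt_size.1 (by omega)
  by_cases hcase : s ≤ c + 5
  · omega
  · have hs6 : 6 ≤ s := by omega
    have := three_mul_le hs6
    omega

lemma KC_set_nonempty (U : OptimalMachine) (x z : ℕ) :
    {L | ∃ p : ℕ, x ∈ U.V (Nat.pair p z) ∧ Nat.size p = L}.Nonempty := by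
  have hm : Nat.Partrec (fun i => Part.some (Nat.unpair i).1 : ℕ →. ℕ) := by
    apply Partrec.nat_iff.1
    exact Computable.partrec (Primrec.to_comp (Primrec.fst.comp Primrec.unpair))
  obtain ⟨c, hc⟩ := U.optimal _ hm
  obtain ⟨q, hq, -⟩ := hc x z x (by simp)
  exact ⟨Nat.size q, q, hq, rfl⟩

/-- The auxiliary machine: decode `r` into `(k, d, p, s)` with `s = size p`
and run `U.V (pair p (s + d))`. -/
def Vm (U : OptimalMachine) : ℕ →. ℕ := fun i =>
  (Nat.rfind fun j => Part.some (QB i.unpair.1 j)).bind fun j =>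
    U.V (Nat.pair j.unpair.2.unpair.1 (j.unpair.2.unpair.2 + j.unpair.1.unpair.2))

lemma primrec_uf : Primrec (fun n : ℕ => n.unpair.1) :=
  Primrec.fst.comp Primrec.unpair

lemma primrec_us : Primrec (fun n : ℕ => n.unpair.2) :=
  Primrec.snd.comp Primrec.unpair

lemma primrec_pow : Primrec₂ ((· ^ ·) : ℕ → ℕ → ℕ) :=
  Primrec₂.unpaired'.1 Nat.Primrec.pow

lemma Vm_partrec (U : OptimalMachine) : Nat.Partrec (Vm U) := by
  apply Partrec.nat_iff.1
  apply Partrec.bind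
  · apply Partrec.rfind
    apply Computable₂.partrec₂
    apply Primrec₂.to_comp
    -- Primrec₂ fun i j => QB i.unpair.1 j
    have hr : Primrec (fun a : ℕ × ℕ => a.1.unpair.1) := primrec_uf.comp Primrec.fst
    have hk : Primrec (fun a : ℕ × ℕ => a.2.unpair.1.unpair.1) :=
      primrec_uf.comp (primrec_uf.comp Primrec.snd)
    have hd : Primrec (fun a : ℕ × ℕ => a.2.unpair.1.unpair.2) :=
      primrec_us.comp (primrec_uf.comp Primrec.snd)
    have hp : Primrec (fun a : ℕ × ℕ => a.2.unpair.2.unpair.1) :=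
      primrec_uf.comp (primrec_us.comp Primrec.snd)
    have hs : Primrec (fun a : ℕ × ℕ => a.2.unpair.2.unpair.2) :=
      primrec_us.comp (primrec_us.comp Primrec.snd)
    have h2k : Primrec (fun a : ℕ × ℕ => (2 : ℕ) ^ a.2.unpair.1.unpair.1) :=
      primrec_pow.comp (Primrec.const 2) hk
    have h2s : Primrec (fun a : ℕ × ℕ => (2 : ℕ) ^ a.2.unpair.2.unpair.2) :=
      primrec_pow.comp (Primrec.const 2) hs
    have hE : Primrec (fun a : ℕ × ℕ =>
        E a.2.unpair.1.unpair.1 a.2.unpair.1.unpair.2 a.2.unpair.2.unpair.1) := by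
      unfold E
      exact Primrec.nat_mul.comp
        (Primrec.nat_add.comp
          (Primrec.nat_mul.comp (Primrec.const 2)
            (Primrec.nat_add.comp (Primrec.nat_mul.comp hp h2k) hd))
          (Primrec.const 1)) h2k
    have c1 : PrimrecPred (fun a : ℕ × ℕ =>
        a.1.unpair.1 = E a.2.unpair.1.unpair.1 a.2.unpair.1.unpair.2 a.2.unpair.2.unpair.1) :=
      PrimrecRel.comp Primrec.eq hr hE
    have c2 : PrimrecPred (fun a : ℕ × ℕ =>
        a.2.unpair.1.unpair.2 < 2 ^ a.2.unpair.1.unpair.1) :=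
      PrimrecRel.comp Primrec.nat_lt hd h2k
    have c3 : PrimrecPred (fun a : ℕ × ℕ =>
        a.2.unpair.2.unpair.1 < 2 ^ a.2.unpair.2.unpair.2) :=
      PrimrecRel.comp Primrec.nat_lt hp h2s
    have c4 : PrimrecPred (fun a : ℕ × ℕ =>
        2 ^ a.2.unpair.2.unpair.2 ≤ 2 * a.2.unpair.2.unpair.1 + 1) :=
      PrimrecRel.comp Primrec.nat_le h2s
        (Primrec.nat_add.comp (Primrec.nat_mul.comp (Primrec.const 2) hp) (Primrec.const 1))
    have := ((c1.and c2).and c3).and c4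
    refine Primrec.of_eq this.decide ?_
    intro a
    simp only [QB, Bool.decide_and, Bool.and_assoc]
  · have e1 : Primrec (fun a : ℕ × ℕ => a.2.unpair.2.unpair.1) :=
      primrec_uf.comp (primrec_us.comp Primrec.snd)
    have e2 : Primrec (fun a : ℕ × ℕ => a.2.unpair.2.unpair.2) :=
      primrec_us.comp (primrec_us.comp Primrec.snd)
    have e3 : Primrec (fun a : ℕ × ℕ => a.2.unpair.1.unpair.2) :=
      primrec_us.comp (primrec_uf.comp Primrec.snd)
    exact (Partrec.nat_iff.2 U.partrec).comp
      (Primrec.to_comp (Primrec₂.natPair.comp e1 (Primrec.nat_add.comp e2 e3)))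

end KCaux

open KCaux in
/-- C(x) ≤ C(x | C(x)) + O(1): there is a constant c such that for
every string x, C(x) ≤ C(x | C(x)) + c (unconditional complexity is complexity
conditional on the empty string, encoded as 0). -/
theorem complexity_le_conditional_on_own_complexity (U : OptimalMachine) :
    ∃ c : ℕ, ∀ x : ℕ, KC U x 0 ≤ KC U x (KC U x 0) + c := by
  obtain ⟨c0, hc0⟩ := U.optimal (Vm U) (Vm_partrec U)
  refine ⟨3 * (c0 + 1) + 15, fun x => ?_⟩
  set n := KC U x 0 with hn
  set m := KC U x n with hm
  by_cases hnm : n ≤ m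
  · omega
  push_neg at hnm
  -- get a shortest program p for x given n
  have hne := KC_set_nonempty U x n
  have hmem : m ∈ {L | ∃ p : ℕ, x ∈ U.V (Nat.pair p n) ∧ Nat.size p = L} := by
    rw [hm, KC]; exact Nat.sInf_mem hne
  obtain ⟨p, hp, hps⟩ := hmem
  set d := n - m with hd
  set k := Nat.size d with hk
  set r := E k d p with hr
  have hdlt : d < 2 ^ k := Nat.lt_size_self d
  -- x is produced by Vm on input (r, 0)
  have hx : x ∈ Vm U (Nat.pair r 0) := by
    set j0 := Nat.pair (Nat.pair k d) (Nat.pair p (Nat.size p)) with hj0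
    have hQ : QB r j0 = true := by
      simp only [QB, hj0, Nat.unpair_pair, Bool.and_eq_true, decide_eq_true_eq]
      exact ⟨⟨⟨hr, hdlt⟩, Nat.lt_size_self p⟩, pow_size_le p⟩
    have hmemr : j0 ∈ Nat.rfind fun j => Part.some (QB (Nat.pair r 0).unpair.1 j) := by
      refine Nat.mem_rfind.2 ?_
      constructor
      · simp only [Nat.unpair_pair]
        exact Part.mem_some_iff.2 hQ.symm
      · intro j' hj'
        simp only [Nat.unpair_pair, Part.mem_some_iff]
        by_contra hne'
        have hQ' : QB r j' = true := by
          cases h' : QB r j' with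
          | false => exact absurd h'.symm hne'
          | true => rfl
        -- uniqueness forces j' = j0
        simp only [QB, Bool.and_eq_true, decide_eq_true_eq] at hQ'
        obtain ⟨⟨⟨h1, h2⟩, h3⟩, h4⟩ := hQ'
        obtain ⟨hk1, hd1, hp1⟩ := E_inj h2 hdlt h1.symm
        have hs1 : j'.unpair.2.unpair.2 = Nat.size p := by
          rw [← hp1]; exact size_char h3 h4
        have : j' = j0 := by
          rw [hj0, ← hs1, ← hk1, ← hd1, ← hp1, Nat.pair_unpair, Nat.pair_unpair,
            Nat.pair_unpair]
        omega
    refine Part.mem_bind_iff.2 ⟨j0, hmemr, ?_⟩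
    simp only [hj0, Nat.unpair_pair]
    have hxx : Nat.size p + d = n := by omega
    rw [hxx]
    exact hp
  obtain ⟨q, hq, hqs⟩ := hc0 r 0 x hx
  have hnle : n ≤ Nat.size q := by
    rw [hn, KC]
    exact Nat.sInf_le ⟨q, hq, rfl⟩
  have hsr : Nat.size r ≤ Nat.size p + 2 * k + 1 := size_E hdlt
  have hdb : d ≤ 2 * Nat.size d + (c0 + 1) := by omega
  have := d_bound hdb
  omega
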